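/- For every irrational x ∈ (0,1), the sequence (Q_n(x))_{n≥1} of denominators of the SCF convergents of x is strictly increasing. -/
import Mathlib


open MeasureTheory Real Set Filter Topology

namespace SCF

/-- The involution `ι(x) = (1−x)/(1+x)`. -/
noncomputable def iota (x : ℝ) : ℝ := (1 - x) / (1 + x)

/-- Even continued-fraction step.  For `y ∈ (0,1/2]` one has
`⌊(1/y+1)/2⌋ = k` whenever `1/y ∈ (2k−1, 2k+1)`, so `Te y = |1/y − 2k|`;
explicitly `Te y = 1/y − 2` on `[1/3,1/2]`, `Te y = 1/y − 2k` on
`[1/(2k+1), 1/(2k))` and `Te y = 2k − 1/y` on `[1/(2k), 1/(2k−1))` (`k ≥ 2`). -/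
noncomputable def Te (y : ℝ) : ℝ := |1 / y - 2 * (⌊(1 / y + 1) / 2⌋ : ℝ)|

/-- The spliced continued fraction (SCF) map `T : [0,1] → [0,1]`, with
`T 0 = 0`, `T 1 = 1`.  On `(0,1/2]` it is the even continued fraction map
(see `Te`), and on `(1/2,1)` it is the odd–odd map, which is the conjugate
`ι ∘ Te ∘ ι` of the even map; this agrees with the branchwise definition:
`T x = (k x − (k−1))/(k − (k+1) x)` on `((k−1)/k, (2k−1)/(2k+1)]` and
`T x = (k − (k+1) x)/(k x − (k−1))` on `((2k−1)/(2k+1), k/(k+1)]` for `k ≥ 2`. -/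
noncomputable def T (x : ℝ) : ℝ :=
  if x ≤ 0 then 0
  else if 1 ≤ x then 1
  else if x ≤ 1 / 2 then Te x
  else iota (Te (iota x))

/-- Parity label of a digit: `e` (even cusp) or `o` (odd–odd cusp). -/
inductive Par | e | o
deriving DecidableEq

/-- A candidate SCF digit `(a, ε)_s`. -/
structure Digit where
  a : ℤ
  eps : ℤ
  s : Par
deriving DecidableEq

/-- The digit set `𝒜 = {(k,ε)_s : k ≥ 2, ε = ±1, s ∈ {e,o}} ∪ {(1,+1)_e}`. -/
def Digit.Valid (d : Digit) : Prop :=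
  (2 ≤ d.a ∧ (d.eps = 1 ∨ d.eps = -1)) ∨ (d.a = 1 ∧ d.eps = 1 ∧ d.s = Par.e)

/-- The branch intervals `I_{(a,ε)_s}` of the SCF map. -/
noncomputable def branch (d : Digit) : Set ℝ :=
  match d.s with
  | Par.e =>
      if d.a = 1 then Set.Icc (1/3 : ℝ) (1/2)
      else if d.eps = 1 then Set.Ico (1 / (2 * (d.a : ℝ) + 1)) (1 / (2 * (d.a : ℝ)))
      else Set.Ico (1 / (2 * (d.a : ℝ))) (1 / (2 * (d.a : ℝ) - 1))
  | Par.o =>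
      if d.eps = 1 then
        Set.Ioc ((2 * (d.a : ℝ) - 1) / (2 * (d.a : ℝ) + 1)) ((d.a : ℝ) / ((d.a : ℝ) + 1))
      else
        Set.Ioc (((d.a : ℝ) - 1) / (d.a : ℝ)) ((2 * (d.a : ℝ) - 1) / (2 * (d.a : ℝ) + 1))

open Classical in
/-- The SCF digit of a point `y` (the unique valid digit `d` with `y ∈ I_d`;
well defined for every `y ∈ (0,1)`). -/
noncomputable def digit (y : ℝ) : Digit :=
  if h : ∃ d : Digit, d.Valid ∧ y ∈ branch d then h.choose else ⟨1, 1, Par.e⟩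

/-- The `n`-th SCF digit `(a_n(x), ε_n(x))_{s_n(x)}` of `x`, `n ≥ 1`,
determined by `T^[n−1] x ∈ I_{(a_n,ε_n)_{s_n}}`. -/
noncomputable def dig (n : ℕ) (x : ℝ) : Digit := digit (T^[n - 1] x)

/-- The `n`-th SCF partial quotient `a_n(x)`. -/
noncomputable def a (n : ℕ) (x : ℝ) : ℤ := (dig n x).a

/-- The invariant density `f_μ`. -/
noncomputable def fdens (x : ℝ) : ℝ :=
  2 / (Real.log (2 + Real.sqrt 3) * (1 - (2 - Real.sqrt 3) * x) * (1 + Real.sqrt 3 * x))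

/-- The absolutely continuous `T`-invariant probability measure `μ` on `(0,1)`. -/
noncomputable def mu : Measure ℝ :=
  (volume.restrict (Set.Ioo (0 : ℝ) 1)).withDensity fun x => ENNReal.ofReal (fdens x)

/-- The inverse branches `h_{(a,ε)_s}` of the SCF map `T`. -/
noncomputable def h (d : Digit) (x : ℝ) : ℝ :=
  match d.s with
  | Par.e => 1 / (2 * (d.a : ℝ) + (d.eps : ℝ) * x)
  | Par.o =>
      if d.eps = 1 then (((d.a : ℝ) - 1) * x + (d.a : ℝ)) / ((d.a : ℝ) * x + ((d.a : ℝ) + 1))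
      else ((d.a : ℝ) * x + ((d.a : ℝ) - 1)) / (((d.a : ℝ) + 1) * x + (d.a : ℝ))

/-- Composed inverse branch `h_{A^{(n)}} = h_{A₁} ∘ ⋯ ∘ h_{A_n}` of a word. -/
noncomputable def hWord (l : List Digit) : ℝ → ℝ :=
  l.foldr (fun d g => h d ∘ g) id

/-- The dual inverse branches `bar h_{(b,η)_t}`. -/
noncomputable def hbar (d : Digit) (y : ℝ) : ℝ :=
  match d.s with
  | Par.e => (d.eps : ℝ) / (2 * (d.a : ℝ) + y)
  | Par.o =>
      1 / (1 + (d.eps : ℝ) / (((d.a : ℝ) - ((max 0 d.eps : ℤ) : ℝ)) + 1 / (1 + y)))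

/-- The matrix `M_{(a,ε)_s}` associated with the inverse branch `h_{(a,ε)_s}`. -/
noncomputable def Mdig (d : Digit) : Matrix (Fin 2) (Fin 2) ℝ :=
  match d.s with
  | Par.e => !![0, 1; (d.eps : ℝ), 2 * (d.a : ℝ)]
  | Par.o =>
      !![(d.a : ℝ) - ((max 0 d.eps : ℤ) : ℝ), (d.a : ℝ) - ((max 0 d.eps : ℤ) : ℝ) + (d.eps : ℝ);
         (d.a : ℝ) - ((max 0 d.eps : ℤ) : ℝ) + 1, (d.a : ℝ) - ((max 0 d.eps : ℤ) : ℝ) + (d.eps : ℝ) + 1]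

/-- `M_n(x) = M_{(a₁,ε₁)_{s₁}} ⋯ M_{(a_n,ε_n)_{s_n}}`. -/
noncomputable def Mn (n : ℕ) (x : ℝ) : Matrix (Fin 2) (Fin 2) ℝ :=
  ((List.range n).map fun i => Mdig (digit (T^[i] x))).prod

/-- `P_n(x)`: the `(1,2)`-entry of `M_n(x)` (numerator of the `n`-th convergent). -/
noncomputable def Pc (n : ℕ) (x : ℝ) : ℝ := Mn n x 0 1

/-- `Q_n(x)`: the `(2,2)`-entry of `M_n(x)` (denominator of the `n`-th convergent). -/
noncomputable def Qc (n : ℕ) (x : ℝ) : ℝ := Mn n x 1 1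


lemma digit_valid (y : ℝ) : (digit y).Valid := by
  unfold digit
  by_cases h : ∃ d : Digit, d.Valid ∧ y ∈ branch d
  · rw [dif_pos h]; exact h.choose_spec.1
  · rw [dif_neg h]; exact Or.inr ⟨rfl, rfl, rfl⟩

lemma step (M : Matrix (Fin 2) (Fin 2) ℝ) (d : Digit) (hd : d.Valid)
    (h1 : 0 < M 1 1) (h2 : 0 < M 1 0 + M 1 1) :
    M 1 1 < (M * Mdig d) 1 1 ∧ 0 < (M * Mdig d) 1 0 + (M * Mdig d) 1 1 := by
  obtain ⟨a, eps, s⟩ := d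
  cases s with
  | e =>
    have ha : (1 : ℝ) ≤ (a : ℝ) := by
      rcases hd with ⟨ha, _⟩ | ⟨ha, _, _⟩
      · exact_mod_cast le_trans (by norm_num) (Int.cast_le.mpr ha)
      · rw [show a = 1 from ha]; norm_num
    have heps : eps = 1 ∨ eps = -1 := by
      rcases hd with ⟨_, h⟩ | ⟨_, h, _⟩
      · exact h
      · exact Or.inl h
    rcases heps with h | h <;> subst h <;>
      simp [Mdig, Matrix.mul_apply, Fin.sum_univ_two] <;>
      (try constructor) <;> nlinarith [h1, h2, ha]
  | o =>
    rcases hd with ⟨ha, heps⟩ | ⟨_, _, hs⟩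
    · have ha' : (2 : ℝ) ≤ (a : ℝ) := by exact_mod_cast ha
      rcases heps with h | h <;> subst h <;>
        simp [Mdig, Matrix.mul_apply, Fin.sum_univ_two] <;>
        (try constructor) <;> nlinarith [h1, h2, ha']
    · exact absurd hs (by simp)

lemma Mn_succ (n : ℕ) (x : ℝ) :
    Mn (n + 1) x = Mn n x * Mdig (digit (T^[n] x)) := by
  unfold Mn
  rw [List.range_succ, List.map_append, List.prod_append]
  simp

/-- for every irrational `x ∈ (0,1)` the sequence `(Q_n(x))_{n ≥ 1}`
of denominators of the SCF convergents is strictly increasing. -/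
theorem Qc_strictMono :
    ∀ x ∈ Set.Ioo (0 : ℝ) 1, Irrational x →
      StrictMono (fun n : ℕ => Qc (n + 1) x) := by
  intro x _ _
  have key : ∀ n : ℕ, 0 < Mn n x 1 1 ∧ 0 < Mn n x 1 0 + Mn n x 1 1 := by
    intro n
    induction n with
    | zero =>
      constructor <;> simp [Mn, Matrix.one_apply]
    | succ n ih =>
      rw [Mn_succ]
      obtain ⟨hlt, hsum⟩ := step (Mn n x) _ (digit_valid _) ih.1 ih.2
      exact ⟨lt_trans ih.1 hlt, hsum⟩
  apply strictMono_nat_of_lt_succ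
  intro n
  show Qc (n + 1) x < Qc (n + 1 + 1) x
  unfold Qc
  rw [Mn_succ (n + 1) x]
  exact (step (Mn (n + 1) x) _ (digit_valid _) (key (n + 1)).1 (key (n + 1)).2).1

end SCF
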